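/- Let k be a positive integer, l a non-negative integer, and p a non-negative real number such that k + l + p > 2; let r be a non-negative integer. Let Ω ⊆ ℝ³ with coordinates (A,B,D) be the set defined by the inequalities A^{k−1}B^l ≤ 2D^r, A ≥ B ≥ 1, A ≥ k + l + p, D ≥ B, together with the additional inequality D ≥ A in the case k ≥ 2. Define L(A,B,D) = (k−2)A + lB − rD + p. Then L(A,B,D) ≤ 0 for every (A,B,D) ∈ Ω. Moreover, if (A,B,D) ∈ Ω and L(A,B,D) = 0, then A = p + 2 and p > 0. -/

import Mathlib

/-- Weierstrass product inequality: for reals all `≥ 1`,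
`1 + Σ (x - 1) ≤ Π x`. -/
lemma weier_aux (s : Multiset ℝ) (h : ∀ x ∈ s, 1 ≤ x) :
    1 + (s.map (fun x => x - 1)).sum ≤ s.prod := by
  induction s using Multiset.induction with
  | empty => simp
  | cons a t ih =>
    have ha : 1 ≤ a := h a (Multiset.mem_cons_self a t)
    have ht : ∀ x ∈ t, 1 ≤ x := fun x hx => h x (Multiset.mem_cons_of_mem hx)
    have ih' := ih ht
    have hsum : 0 ≤ (t.map (fun x => x - 1)).sum := by
      apply Multiset.sum_nonneg
      intro z hz
      obtain ⟨w, hw, rfl⟩ := Multiset.mem_map.mp hz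
      linarith [ht w hw]
    simp only [Multiset.map_cons, Multiset.sum_cons, Multiset.prod_cons]
    nlinarith [ih', hsum, ha]

/-- Core multiset lemma: if all elements lie in `[1, D]` and the product is
at most `2 * D ^ r`, then the sum of `x - 1` is at most `r * D + 1`
(and at most `r * D` when `r ≥ 1`). -/
lemma core_aux : ∀ (n r : ℕ) (D : ℝ) (s : Multiset ℝ), 1 ≤ D →
    Multiset.card s = n → (∀ x ∈ s, 1 ≤ x ∧ x ≤ D) → s.prod ≤ 2 * D ^ r →
    (s.map (fun x => x - 1)).sum ≤ (r : ℝ) * D + 1 ∧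
      (1 ≤ r → (s.map (fun x => x - 1)).sum ≤ (r : ℝ) * D) := by
  intro n
  induction n with
  | zero =>
    intro r D s hD hcard hmem hprod
    rw [Multiset.card_eq_zero] at hcard
    subst hcard
    simp only [Multiset.map_zero, Multiset.sum_zero]
    have : (0:ℝ) ≤ (r : ℝ) * D := by positivity
    constructor <;> intros <;> linarith
  | succ n ih =>
    intro r D s hD hcard hmem hprod
    have hD0 : (0:ℝ) < D := by linarith
    rcases Nat.eq_zero_or_pos r with hr | hr
    · -- r = 0 : Weierstrass inequality
      subst hr
      have hw := weier_aux s (fun x hx => (hmem x hx).1)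
      simp only [pow_zero, mul_one] at hprod
      refine ⟨by push_cast; linarith, fun h => absurd h (by omega)⟩
    · -- r ≥ 1
      have hpos : 0 < Multiset.card s := by omega
      obtain ⟨x, hx⟩ := Multiset.card_pos_iff_exists_mem.mp hpos
      obtain ⟨t, rfl⟩ := Multiset.exists_cons_of_mem hx
      have hcardt : Multiset.card t = n := by
        rw [Multiset.card_cons] at hcard; omega
      have hx1 : 1 ≤ x := (hmem x (Multiset.mem_cons_self x t)).1
      have hxD : x ≤ D := (hmem x (Multiset.mem_cons_self x t)).2
      rcases Nat.eq_zero_or_pos n with hn | hn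
      · -- singleton
        rw [hn, Multiset.card_eq_zero] at hcardt
        subst hcardt
        simp only [Multiset.map_cons, Multiset.map_zero, Multiset.sum_cons,
          Multiset.sum_zero, add_zero]
        have hr1 : (1:ℝ) ≤ (r:ℝ) := by exact_mod_cast hr
        have : D ≤ (r:ℝ) * D := by nlinarith
        exact ⟨by linarith, fun _ => by linarith⟩
      · -- pick a second element y
        have hpos' : 0 < Multiset.card t := by omega
        obtain ⟨y, hy⟩ := Multiset.card_pos_iff_exists_mem.mp hpos'
        obtain ⟨u, rfl⟩ := Multiset.exists_cons_of_mem hy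
        have hcardu : Multiset.card u = n - 1 := by
          rw [Multiset.card_cons] at hcardt; omega
        have hy1 : 1 ≤ y := (hmem y (Multiset.mem_cons_of_mem (Multiset.mem_cons_self y u))).1
        have hyD : y ≤ D := (hmem y (Multiset.mem_cons_of_mem (Multiset.mem_cons_self y u))).2
        have humem : ∀ w ∈ u, 1 ≤ w ∧ w ≤ D := fun w hw =>
          hmem w (Multiset.mem_cons_of_mem (Multiset.mem_cons_of_mem hw))
        have hprod' : x * (y * u.prod) ≤ 2 * D ^ r := by
          simpa [Multiset.prod_cons] using hprod
        have husum : 0 ≤ (u.map (fun x => x - 1)).sum := by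
          apply Multiset.sum_nonneg
          intro z hz
          obtain ⟨w, hw, rfl⟩ := Multiset.mem_map.mp hz
          linarith [(humem w hw).1]
        have huprod : (0:ℝ) < u.prod :=
          lt_of_lt_of_le one_pos (by
            calc (1:ℝ) = 1 + 0 := by ring
            _ ≤ 1 + (u.map (fun x => x - 1)).sum := by linarith
            _ ≤ u.prod := weier_aux u (fun w hw => (humem w hw).1))
        by_cases hxy : D ≤ x * y
        · -- merge into x*y/D and peel one power of D
          obtain ⟨q, rfl⟩ : ∃ q, r = q + 1 := ⟨r - 1, by omega⟩
          set z : ℝ := x * y / D with hzdef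
          have hz : z * D = x * y := by rw [hzdef, div_mul_cancel₀ _ hD0.ne']
          have hz1 : 1 ≤ z := by rw [hzdef, le_div_iff₀ hD0]; linarith
          have hzD : z ≤ D := by rw [hzdef, div_le_iff₀ hD0]; nlinarith
          have hcard' : Multiset.card (z ::ₘ u) = n := by
            rw [Multiset.card_cons]; omega
          have hmem' : ∀ w ∈ (z ::ₘ u), 1 ≤ w ∧ w ≤ D := by
            intro w hw
            rcases Multiset.mem_cons.mp hw with h | h
            · exact h ▸ ⟨hz1, hzD⟩
            · exact humem w h
          have hprod'' : (z ::ₘ u).prod ≤ 2 * D ^ q := by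
            rw [Multiset.prod_cons, ← mul_le_mul_iff_of_pos_right hD0]
            calc z * u.prod * D = z * D * u.prod := by ring
            _ = x * y * u.prod := by rw [hz]
            _ = x * (y * u.prod) := by ring
            _ ≤ 2 * D ^ (q + 1) := hprod'
            _ = 2 * D ^ q * D := by ring
          obtain ⟨ih1, _⟩ := ih q D (z ::ₘ u) hD hcard' hmem' hprod''
          simp only [Multiset.map_cons, Multiset.sum_cons] at ih1 ⊢
          -- (x-1)+(y-1) ≤ (z-1)+(D-1) since (D-x)(D-y) ≥ 0 and zD = xy
          have hkey : x + y ≤ z + D := by nlinarith [mul_nonneg (sub_nonneg.mpr hxD) (sub_nonneg.mpr hyD)]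
          have hfin : x - 1 + (y - 1 + (u.map (fun x => x - 1)).sum) ≤ ((q:ℝ) + 1) * D := by
            nlinarith
          push_cast
          exact ⟨by linarith, fun _ => by linarith⟩
        · -- merge into x*y, same r
          push_neg at hxy
          have hz1 : 1 ≤ x * y := by nlinarith
          have hcard' : Multiset.card ((x * y) ::ₘ u) = n := by
            rw [Multiset.card_cons]; omega
          have hmem' : ∀ w ∈ ((x * y) ::ₘ u), 1 ≤ w ∧ w ≤ D := by
            intro w hw
            rcases Multiset.mem_cons.mp hw with h | h
            · exact h ▸ ⟨hz1, le_of_lt hxy⟩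
            · exact humem w h
          have hprod'' : ((x * y) ::ₘ u).prod ≤ 2 * D ^ r := by
            rw [Multiset.prod_cons]
            calc x * y * u.prod = x * (y * u.prod) := by ring
            _ ≤ 2 * D ^ r := hprod'
          obtain ⟨_, ih2⟩ := ih r D ((x * y) ::ₘ u) hD hcard' hmem' hprod''
          have ih2' := ih2 hr
          simp only [Multiset.map_cons, Multiset.sum_cons] at ih2' ⊢
          have hmul : 0 ≤ (x - 1) * (y - 1) := mul_nonneg (by linarith) (by linarith)
          exact ⟨by nlinarith, fun _ => by nlinarith⟩

/-- Let `k ≥ 1`, `l ≥ 0`, `r ≥ 0` be integers and `p ≥ 0` a real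
number with `k + l + p > 2`. For reals `(A, B, D)` with `A^{k−1} B^l ≤ 2 D^r`,
`A ≥ B ≥ 1`, `A ≥ k + l + p`, `D ≥ B`, and additionally `D ≥ A` if `k ≥ 2`,
the function `L(A,B,D) = (k−2)A + lB − rD + p` is non-positive; moreover, if
`L(A,B,D) = 0` then `A = p + 2` and `p > 0`. -/
theorem stmt_2 (k l r : ℕ) (hk : 1 ≤ k) (p : ℝ) (hp : 0 ≤ p)
    (hklp : 2 < (k : ℝ) + (l : ℝ) + p)
    (A B D : ℝ)
    (h1 : A ^ (k - 1) * B ^ l ≤ 2 * D ^ r)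
    (h2 : B ≤ A) (h3 : 1 ≤ B)
    (h4 : (k : ℝ) + (l : ℝ) + p ≤ A)
    (h5 : B ≤ D)
    (h6 : 2 ≤ k → A ≤ D) :
    ((k : ℝ) - 2) * A + (l : ℝ) * B - (r : ℝ) * D + p ≤ 0 ∧
      (((k : ℝ) - 2) * A + (l : ℝ) * B - (r : ℝ) * D + p = 0 → A = p + 2 ∧ 0 < p) := by
  obtain ⟨a, rfl⟩ : ∃ a, k = a + 1 := ⟨k - 1, by omega⟩
  have hk1 : a + 1 - 1 = a := by omega
  rw [hk1] at h1
  push_cast at h4 hklp ⊢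
  have hA1 : 1 ≤ A := h3.trans h2
  have hD1 : 1 ≤ D := h3.trans h5
  set s : Multiset ℝ := Multiset.replicate a A + Multiset.replicate l B with hsdef
  have hmem : ∀ x ∈ s, 1 ≤ x ∧ x ≤ D := by
    intro x hxs
    rw [hsdef, Multiset.mem_add] at hxs
    rcases hxs with h | h
    · obtain ⟨hane, rfl⟩ := Multiset.mem_replicate.mp h
      exact ⟨hA1, h6 (by omega)⟩
    · obtain ⟨-, rfl⟩ := Multiset.mem_replicate.mp h
      exact ⟨h3, h5⟩
  have hprod : s.prod ≤ 2 * D ^ r := by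
    rw [hsdef, Multiset.prod_add, Multiset.prod_replicate, Multiset.prod_replicate]
    exact h1
  have hsum : (s.map (fun x => x - 1)).sum = (a : ℝ) * (A - 1) + (l : ℝ) * (B - 1) := by
    rw [hsdef, Multiset.map_add, Multiset.sum_add, Multiset.map_replicate,
      Multiset.map_replicate, Multiset.sum_replicate, Multiset.sum_replicate,
      nsmul_eq_mul, nsmul_eq_mul]
  obtain ⟨m1, m2⟩ := core_aux (a + l) r D s hD1 (by
    rw [hsdef, Multiset.card_add, Multiset.card_replicate, Multiset.card_replicate]) hmem hprod
  rw [hsum] at m1 m2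
  refine ⟨by linarith [m1], fun hL => ?_⟩
  have hLa : ((a : ℝ) - 1) * A + (l : ℝ) * B - (r : ℝ) * D + p = 0 := by linarith
  -- both inequalities are equalities
  have hAeq : A = (a : ℝ) + 1 + (l : ℝ) + p := by linarith [m1]
  have hSeq : (a : ℝ) * (A - 1) + (l : ℝ) * (B - 1) = (r : ℝ) * D + 1 := by linarith [m1]
  -- r must be 0
  have hr0 : r = 0 := by
    by_contra hne
    have := m2 (by omega)
    linarith
  subst hr0
  simp only [pow_zero, mul_one] at h1
  -- a must be 0
  have ha0 : a = 0 := by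
    by_contra hane
    have hAa : A ≤ A ^ a := le_self_pow₀ hA1 hane
    have hBl : (1:ℝ) ≤ B ^ l := one_le_pow₀ h3
    have hmono : A ≤ A ^ a * B ^ l :=
      hAa.trans (le_mul_of_one_le_right (by positivity) hBl)
    have hA2 : 2 < A := by rw [hAeq]; linarith
    linarith
  subst ha0
  simp only [Nat.cast_zero, zero_mul, zero_add] at hAeq hSeq h1 hklp
  simp only [pow_zero, one_mul] at h1
  -- now l * (B - 1) = 1
  have hlne : l ≠ 0 := by
    rintro rfl
    norm_num at hSeq
  have hl1 : l = 1 := by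
    by_contra hlne1
    have hl2 : 2 ≤ l := by omega
    -- strict Bernoulli: B^l > 1 + l (B-1) = 2
    have hu : 0 < B - 1 := by
      rcases lt_or_ge 1 B with h | h
      · linarith
      · exfalso
        have : (l : ℝ) * (B - 1) ≤ 0 := by
          apply mul_nonpos_of_nonneg_of_nonpos (Nat.cast_nonneg l)
          linarith
        linarith
    have hber : 1 + ((l : ℝ) - 2) * (B - 1) ≤ B ^ (l - 2) := by
      have := one_add_mul_le_pow (a := B - 1) (by linarith) (l - 2)
      have hc : ((l - 2 : ℕ) : ℝ) = (l : ℝ) - 2 := by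
        push_cast [Nat.cast_sub hl2]; ring
      rw [hc] at this
      rwa [add_sub_cancel] at this
    have hsplit : B ^ l = B ^ 2 * B ^ (l - 2) := by
      rw [← pow_add]; congr 1; omega
    have hB2 : B ^ 2 = 1 + 2 * (B - 1) + (B - 1) ^ 2 := by ring
    have h2u : 2 * (B - 1) ≤ 1 := by
      have h2l : (2:ℝ) ≤ (l:ℝ) := by exact_mod_cast hl2
      nlinarith [hSeq, hu]
    have hw2 : 2 - 2 * (B - 1) ≤ B ^ (l - 2) := by
      have : ((l:ℝ) - 2) * (B - 1) = (l:ℝ) * (B - 1) - 2 * (B - 1) := by ring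
      linarith [hber, hSeq]
    have hpos2 : (0:ℝ) ≤ 1 + 2 * (B - 1) + (B - 1) ^ 2 := by positivity
    have hmul := mul_le_mul_of_nonneg_left hw2 hpos2
    have husq : (B - 1) * (B - 1) ≤ (1/2) * (B - 1) := by nlinarith [hu, h2u]
    have : 2 < B ^ l := by
      rw [hsplit, hB2]
      nlinarith [hmul, hu, h2u, husq, mul_pos hu hu]
    linarith
  subst hl1
  simp only [Nat.cast_one] at hAeq hklp
  exact ⟨by linarith, by linarith⟩
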